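/- If P is a finite maximal prefix code in BA* (i.e., a maximal set of words in BA* none of which is a prefix of another), where |A| = k and |B| = s, then |P| = s + (k-1)i for some integer i ≥ 0. Conversely, for every integer i ≥ 0 there exists a finite maximal prefix code in BA* of cardinality s + (k-1)i. -/

import Mathlib

/-- A prefix code in BA*: a set of words bw (b ∈ B, w ∈ A*), none of which is a
prefix of another (words with different B-letters are never prefixes of one another). -/
def IsPrefixCodeBA {A B : Type*} (P : Set (B × List A)) : Prop :=
  ∀ p ∈ P, ∀ q ∈ P, p.1 = q.1 → p.2 <+: q.2 → p = q

/-- A maximal prefix code in BA*: not strictly contained in another prefix code of BA*. -/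
def IsMaximalPrefixCodeBA {A B : Type*} (P : Set (B × List A)) : Prop :=
  IsPrefixCodeBA P ∧ ∀ Q : Set (B × List A), IsPrefixCodeBA Q → P ⊆ Q → P = Q

section Aux

variable {A : Type*}

lemma prefTotal {p q r : List A} (h1 : p <+: r) (h2 : q <+: r) (hle : p.length ≤ q.length) :
    p <+: q := by
  have hp : p = r.take p.length := List.prefix_iff_eq_take.1 h1
  have hq : q = r.take q.length := List.prefix_iff_eq_take.1 h2
  have : q.take p.length = p := by
    rw [hq, List.take_take, min_eq_left hle, ← hp]
  exact this ▸ List.take_prefix _ _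

/-- prefix-free predicate on a finset of words -/
def PF (S : Finset (List A)) : Prop := ∀ p ∈ S, ∀ q ∈ S, p <+: q → p = q

/-- completeness predicate -/
def CP (S : Finset (List A)) : Prop := ∀ v : List A, ∃ p ∈ S, p <+: v ∨ v <+: p

variable [Fintype A] [DecidableEq A]

/-- forward direction: a prefix-free complete finite set has cardinality ≡ 1 mod (k-1). -/
lemma card_pf_cp (k : ℕ) (hk : Fintype.card A = k) :
    ∀ N : ℕ, ∀ S : Finset (List A), (∑ w ∈ S, w.length) = N → PF S → CP S →
      ∃ i, S.card = 1 + (k - 1) * i := by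
  intro N
  induction N using Nat.strong_induction_on with
  | _ N ih =>
    intro S hN hpf hcp
    obtain ⟨p0, hp0, -⟩ := hcp []
    have hSne : S.Nonempty := ⟨p0, hp0⟩
    obtain ⟨w, hwS, hwmax⟩ := S.exists_max_image List.length hSne
    by_cases hw0 : w = []
    · -- S = {[]}
      refine ⟨0, ?_⟩
      have : S = {[]} := by
        apply Finset.eq_singleton_iff_unique_mem.2
        refine ⟨hw0 ▸ hwS, fun x hx => ?_⟩
        have := hwmax x hx
        rw [hw0] at this
        simpa using List.length_eq_zero_iff.1 (Nat.le_zero.1 this)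
      simp [this]
    · -- w = u ++ [a]
      set u := w.dropLast with hu
      have hw : w = u ++ [w.getLast hw0] := (List.dropLast_append_getLast hw0).symm
      have hulen : u.length + 1 = w.length := by
        rw [hw]; simp
      -- every u ++ [a'] ∈ S
      have hT : ∀ a' : A, u ++ [a'] ∈ S := by
        intro a'
        obtain ⟨p, hpS, hp⟩ := hcp (u ++ [a'])
        rcases hp with hp | hp
        · -- p <+: u ++ [a']
          rcases Nat.lt_or_ge p.length (u.length + 1) with hlt | hge
          · -- p <+: u, so p <+: w, so p = w, contra
            have hpu : p <+: u := by
              refine prefTotal hp (List.prefix_append u [a']) ?_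
              simpa using Nat.lt_succ_iff.1 (by simpa using hlt)
            have hpw : p <+: w := hpu.trans ⟨[w.getLast hw0], hw.symm⟩
            have := hpf p hpS w hwS hpw
            subst this
            exact absurd (hpu.length_le) (by omega)
          · have : p = u ++ [a'] := hp.eq_of_length (le_antisymm hp.length_le (by simpa using hge))
            exact this ▸ hpS
        · -- u ++ [a'] <+: p : length p ≥ |w|, max gives = , so equal
          have hlen : p.length ≤ u.length + 1 := by
            have := hwmax p hpS; omega
          have : u ++ [a'] = p := hp.eq_of_length (le_antisymm hp.length_le (by simpa using hlen))
          exact this ▸ hpS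
      have huS : u ∉ S := by
        intro huS
        have hqw : u <+: w := ⟨[w.getLast hw0], hw.symm⟩
        have heq := congrArg List.length (hpf u huS w hwS hqw)
        omega
      set T : Finset (List A) := Finset.univ.image (fun a' : A => u ++ [a']) with hTdef
      have hTsub : T ⊆ S := by
        intro x hx
        simp only [hTdef, Finset.mem_image, Finset.mem_univ, true_and] at hx
        obtain ⟨a', rfl⟩ := hx
        exact hT a'
      have hTcard : T.card = k := by
        rw [hTdef, Finset.card_image_of_injective _ (fun a b h => by simpa using h),
          Finset.card_univ, hk]
      have hmemT : ∀ x, x ∈ T ↔ ∃ a' : A, x = u ++ [a'] := by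
        intro x; simp [hTdef, eq_comm]
      set S' : Finset (List A) := (S \ T) ∪ {u} with hS'def
      have huT : u ∉ T := by
        intro h; rw [hmemT] at h; obtain ⟨a', h⟩ := h
        exact absurd (congrArg List.length h) (by simp)
      have hmemS' : ∀ x, x ∈ S' ↔ (x ∈ S ∧ x ∉ T) ∨ x = u := by
        intro x; simp [hS'def, or_comm]
      -- S' prefix free
      have hpf' : PF S' := by
        intro p hp q hq hpq
        rw [hmemS'] at hp hq
        rcases hp with ⟨hpS, hpT⟩ | rfl
        · rcases hq with ⟨hqS, hqT⟩ | rfl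
          · exact hpf p hpS q hqS hpq
          · -- p <+: u, so p <+: w, p = w, length contradiction
            have hpw : p <+: p ++ ([w.getLast hw0]) := List.prefix_append _ _
            have : p <+: w := hpq.trans ⟨[w.getLast hw0], hw.symm⟩
            have := hpf p hpS w hwS this
            subst this
            have := hpq.length_le
            omega
        · rcases hq with ⟨hqS, hqT⟩ | rfl
          · -- u <+: q, q ∈ S, q ∉ T
            obtain ⟨t, rfl⟩ := hpq
            cases t with
            | nil => simp
            | cons c rest =>
              exfalso
              have h1 : u ++ [c] <+: u ++ c :: rest := by
                refine ⟨rest, by simp⟩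
              have := hpf (u ++ [c]) (hT c) _ hqS h1
              exact hqT (this ▸ ((hmemT (u ++ [c])).2 ⟨c, rfl⟩))
          · rfl
      -- S' complete
      have hcp' : CP S' := by
        intro v
        obtain ⟨p, hpS, hp⟩ := hcp v
        by_cases hpT : p ∈ T
        · rw [hmemT] at hpT
          obtain ⟨a', rfl⟩ := hpT
          have huS' : u ∈ S' := (hmemS' u).2 (Or.inr rfl)
          rcases hp with hp | hp
          · exact ⟨u, huS', Or.inl ((List.prefix_append u [a']).trans hp)⟩
          · rcases Nat.lt_or_ge v.length (u.length + 1) with hlt | hge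
            · refine ⟨u, huS', Or.inr (prefTotal hp (List.prefix_append u [a']) ?_)⟩
              omega
            · have hv : v = u ++ [a'] :=
                hp.eq_of_length (le_antisymm hp.length_le (by simpa using hge))
              exact ⟨u, huS', Or.inl (by rw [hv]; exact List.prefix_append u [a'])⟩
        · exact ⟨p, (hmemS' p).2 (Or.inl ⟨hpS, hpT⟩), hp⟩
      -- cardinalities
      have hdisj : Disjoint (S \ T) ({u} : Finset (List A)) := by
        simp only [Finset.disjoint_singleton_right, Finset.mem_sdiff]
        intro h; exact huS h.1
      have hkS : k ≤ S.card := hTcard ▸ Finset.card_le_card hTsub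
      -- sum decreases
      have hsum : (∑ x ∈ S', x.length) < N := by
        have h1 : (∑ x ∈ S', x.length) = (∑ x ∈ S \ T, x.length) + u.length := by
          rw [hS'def, Finset.sum_union hdisj, Finset.sum_singleton]
        have h2 : (∑ x ∈ S, x.length) = (∑ x ∈ S \ T, x.length) + (∑ x ∈ T, x.length) :=
          (Finset.sum_sdiff hTsub).symm
        have h3 : (∑ x ∈ T, x.length) = k * (u.length + 1) := by
          rw [hTdef, Finset.sum_image (by intro a _ b _ h; simpa using h)]
          simp [Finset.card_univ, hk, mul_comm]
        have hk0 : 1 ≤ k := hk ▸ Fintype.card_pos_iff.2 ⟨w.getLast hw0⟩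
        have h4 : u.length < k * (u.length + 1) := by nlinarith
        have h5 : (∑ x ∈ S', x.length) + k * (u.length + 1) = N + u.length := by
          rw [h1, ← hN, h2, h3]; ring
        omega
      obtain ⟨i, hi⟩ := ih _ hsum S' rfl hpf' hcp'
      refine ⟨i + 1, ?_⟩
      have hk0 : 1 ≤ k := hk ▸ Fintype.card_pos_iff.2 ⟨w.getLast hw0⟩
      have e1 : S'.card = (S \ T).card + 1 := by
        rw [hS'def, Finset.card_union_of_disjoint hdisj, Finset.card_singleton]
      have e2 : (S \ T).card = S.card - k := by
        rw [Finset.card_sdiff_of_subset hTsub, hTcard]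
      rw [Nat.mul_add, Nat.mul_one]
      omega

/-- converse: existence of prefix-free complete sets of every allowed size. -/
lemma exists_pf_cp (k : ℕ) (hk : Fintype.card A = k) (hk2 : 2 ≤ k) :
    ∀ i : ℕ, ∃ S : Finset (List A), PF S ∧ CP S ∧ S.card = 1 + (k - 1) * i := by
  intro i
  induction i with
  | zero =>
    refine ⟨{[]}, ?_, ?_, by simp⟩
    · intro p hp q hq _; simp only [Finset.mem_singleton] at hp hq; rw [hp, hq]
    · intro v; exact ⟨[], by simp, Or.inl (List.nil_prefix)⟩
  | succ i ihi =>
    obtain ⟨S, hpf, hcp, hcard⟩ := ihi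
    obtain ⟨w, hwS, -⟩ := hcp []
    set T : Finset (List A) := Finset.univ.image (fun a : A => w ++ [a]) with hTdef
    have hmemT : ∀ x, x ∈ T ↔ ∃ a : A, x = w ++ [a] := by
      intro x; simp [hTdef, eq_comm]
    have hTS : ∀ x ∈ T, x ∉ S := by
      intro x hx hxS
      rw [hmemT] at hx; obtain ⟨a, rfl⟩ := hx
      have := hpf w hwS _ hxS (List.prefix_append w [a])
      exact absurd (congrArg List.length this) (by simp)
    set S' : Finset (List A) := S.erase w ∪ T with hS'def
    have hmemS' : ∀ x, x ∈ S' ↔ (x ∈ S ∧ x ≠ w) ∨ x ∈ T := by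
      intro x; simp [hS'def, and_comm]
    refine ⟨S', ?_, ?_, ?_⟩
    · -- PF
      intro p hp q hq hpq
      rw [hmemS'] at hp hq
      rcases hp with ⟨hpS, hpw⟩ | hpT
      · rcases hq with ⟨hqS, _⟩ | hqT
        · exact hpf p hpS q hqS hpq
        · rw [hmemT] at hqT; obtain ⟨a, rfl⟩ := hqT
          rcases Nat.lt_or_ge p.length (w.length + 1) with hlt | hge
          · have hpw' : p <+: w := prefTotal hpq (List.prefix_append w [a]) (by omega)
            exact absurd (hpf p hpS w hwS hpw') hpw
          · exact hpq.eq_of_length (le_antisymm hpq.length_le (by simpa using hge))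
      · rw [hmemT] at hpT; obtain ⟨a, rfl⟩ := hpT
        rcases hq with ⟨hqS, _⟩ | hqT
        · exfalso
          have hwq : w <+: q := (List.prefix_append w [a]).trans hpq
          have := hpf w hwS q hqS hwq
          subst this
          have := hpq.length_le
          simp at this
        · rw [hmemT] at hqT; obtain ⟨b, rfl⟩ := hqT
          exact hpq.eq_of_length (by simp)
    · -- CP
      intro v
      obtain ⟨p, hpS, hp⟩ := hcp v
      by_cases hpw : p = w
      · subst hpw
        rcases hp with hp | hp
        · obtain ⟨t, rfl⟩ := hp
          cases t with
          | nil =>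
            have : Nonempty A := Fintype.card_pos_iff.1 (by omega)
            obtain ⟨a⟩ := this
            exact ⟨p ++ [a], (hmemS' _).2 (Or.inr ((hmemT _).2 ⟨a, rfl⟩)),
              Or.inr (by simp)⟩
          | cons c rest =>
            exact ⟨p ++ [c], (hmemS' _).2 (Or.inr ((hmemT _).2 ⟨c, rfl⟩)),
              Or.inl ⟨rest, by simp⟩⟩
        · have : Nonempty A := Fintype.card_pos_iff.1 (by omega)
          obtain ⟨a⟩ := this
          exact ⟨p ++ [a], (hmemS' _).2 (Or.inr ((hmemT _).2 ⟨a, rfl⟩)),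
            Or.inr (hp.trans (List.prefix_append p [a]))⟩
      · exact ⟨p, (hmemS' p).2 (Or.inl ⟨hpS, hpw⟩), hp⟩
    · -- card
      have hdisj : Disjoint (S.erase w) T := by
        rw [Finset.disjoint_left]
        intro x hx hxT
        exact hTS x hxT (Finset.mem_of_mem_erase hx)
      have hTcard : T.card = k := by
        rw [hTdef, Finset.card_image_of_injective _ (fun a b h => by simpa using h),
          Finset.card_univ, hk]
      rw [hS'def, Finset.card_union_of_disjoint hdisj, Finset.card_erase_of_mem hwS, hTcard,
        hcard, Nat.mul_add, Nat.mul_one]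
      omega

end Aux

section MaxChar

variable {A B : Type*}

/-- characterization of maximality via completeness -/
lemma maximal_iff_complete (P : Set (B × List A)) :
    IsMaximalPrefixCodeBA P ↔ IsPrefixCodeBA P ∧
      ∀ (b : B) (v : List A), ∃ p ∈ P, p.1 = b ∧ (p.2 <+: v ∨ v <+: p.2) := by
  constructor
  · rintro ⟨hpc, hmax⟩
    refine ⟨hpc, fun b v => ?_⟩
    by_contra hcon
    push_neg at hcon
    have hnotP : (b, v) ∉ P := by
      intro h
      exact (hcon (b, v) h rfl).1 (by simp)
    have hQ : IsPrefixCodeBA (P ∪ {(b, v)}) := by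
      rintro p hp q hq h1 h2
      rcases hp with hp | hp
      · rcases hq with hq | hq
        · exact hpc p hp q hq h1 h2
        · simp only [Set.mem_singleton_iff] at hq; subst hq
          exact absurd h2 (hcon p hp h1).1
      · simp only [Set.mem_singleton_iff] at hp; subst hp
        rcases hq with hq | hq
        · exact absurd h2 (hcon q hq h1.symm).2
        · simp only [Set.mem_singleton_iff] at hq; rw [hq]
    have := hmax _ hQ (Set.subset_union_left)
    exact hnotP (this ▸ Set.mem_union_right _ rfl)
  · rintro ⟨hpc, hcomp⟩
    refine ⟨hpc, fun Q hQ hPQ => ?_⟩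
    apply Set.Subset.antisymm hPQ
    intro q hq
    obtain ⟨p, hpP, hb, hp⟩ := hcomp q.1 q.2
    rcases hp with hp | hp
    · have := hQ p (hPQ hpP) q hq hb hp
      exact this ▸ hpP
    · have := hQ q hq p (hPQ hpP) hb.symm hp
      exact this.symm ▸ hpP

end MaxChar

theorem stmt0 {A B : Type*} [Fintype A] [Fintype B] (k s : ℕ)
    (hk : Fintype.card A = k) (hs : Fintype.card B = s) (hk2 : 2 ≤ k) (hs1 : 1 ≤ s) :
    (∀ P : Finset (B × List A), IsMaximalPrefixCodeBA (↑P : Set (B × List A)) →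
      ∃ i : ℕ, P.card = s + (k - 1) * i) ∧
    (∀ i : ℕ, ∃ P : Finset (B × List A), IsMaximalPrefixCodeBA (↑P : Set (B × List A)) ∧
      P.card = s + (k - 1) * i) := by
  classical
  constructor
  · -- forward
    intro P hP
    rw [maximal_iff_complete] at hP
    obtain ⟨hpc, hcomp⟩ := hP
    -- fiberwise
    have hcard : P.card = ∑ b : B, (P.filter (fun p => p.1 = b)).card :=
      Finset.card_eq_sum_card_fiberwise (fun p _ => Finset.mem_univ p.1)
    -- each fiber: image under snd
    have key : ∀ b : B, ∃ i, (P.filter (fun p => p.1 = b)).card = 1 + (k - 1) * i := by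
      intro b
      set Sb : Finset (List A) := (P.filter (fun p => p.1 = b)).image Prod.snd with hSb
      have hinj : Set.InjOn Prod.snd ((P.filter (fun p => p.1 = b)) : Set (B × List A)) := by
        intro p hp q hq h
        simp only [Finset.coe_filter, Set.mem_setOf_eq] at hp hq
        exact Prod.ext (hp.2.trans hq.2.symm) h
      have hScard : Sb.card = (P.filter (fun p => p.1 = b)).card :=
        Finset.card_image_of_injOn hinj
      have hmemSb : ∀ w, w ∈ Sb ↔ (b, w) ∈ P := by
        intro w
        simp only [hSb, Finset.mem_image, Finset.mem_filter]
        constructor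
        · rintro ⟨p, ⟨hpP, hpb⟩, rfl⟩
          rwa [← hpb, Prod.mk.eta]
        · intro h; exact ⟨(b, w), ⟨h, rfl⟩, rfl⟩
      have hpfS : PF Sb := by
        intro p hp q hq hpq
        rw [hmemSb] at hp hq
        have := hpc (b, p) hp (b, q) hq rfl hpq
        simpa using this
      have hcpS : CP Sb := by
        intro v
        obtain ⟨p, hpP, hb, hp⟩ := hcomp b v
        refine ⟨p.2, ?_, hp⟩
        rw [hmemSb, ← hb, Prod.mk.eta]
        exact hpP
      obtain ⟨i, hi⟩ := card_pf_cp k hk _ Sb rfl hpfS hcpS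
      exact ⟨i, hScard ▸ hi⟩
    choose f hf using key
    refine ⟨∑ b : B, f b, ?_⟩
    rw [hcard, Finset.sum_congr rfl (fun b _ => hf b), Finset.sum_add_distrib,
      ← Finset.mul_sum]
    simp [Finset.card_univ, hs]
  · -- converse
    intro i
    have hBne : Nonempty B := Fintype.card_pos_iff.1 (by omega)
    obtain ⟨b₀⟩ := hBne
    obtain ⟨S, hpfS, hcpS, hcardS⟩ := exists_pf_cp k hk hk2 i
    set P : Finset (B × List A) :=
      ((Finset.univ.erase b₀).image (fun b => (b, ([] : List A)))) ∪
        (S.image (fun w => (b₀, w))) with hPdef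
    have hmemP : ∀ p : B × List A, p ∈ P ↔
        (p.1 ≠ b₀ ∧ p.2 = []) ∨ (p.1 = b₀ ∧ p.2 ∈ S) := by
      rintro ⟨b, w⟩
      simp only [hPdef, Finset.mem_union, Finset.mem_image, Finset.mem_erase, Finset.mem_univ,
        and_true, Prod.mk.injEq]
      constructor
      · rintro (⟨b', hb', rfl, rfl⟩ | ⟨w', hw', rfl, rfl⟩)
        · exact Or.inl ⟨hb', rfl⟩
        · exact Or.inr ⟨rfl, hw'⟩
      · rintro (⟨hb, rfl⟩ | ⟨rfl, hw⟩)
        · exact Or.inl ⟨b, hb, rfl, rfl⟩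
        · exact Or.inr ⟨w, hw, rfl, rfl⟩
    refine ⟨P, ?_, ?_⟩
    · rw [maximal_iff_complete]
      constructor
      · rintro p hp q hq h1 h2
        rw [Finset.mem_coe, hmemP] at hp hq
        rcases hp with ⟨hpb, hpw⟩ | ⟨hpb, hpw⟩
        · rcases hq with ⟨hqb, hqw⟩ | ⟨hqb, hqw⟩
          · exact Prod.ext h1 (hpw.trans hqw.symm)
          · exact absurd (h1.trans hqb) hpb
        · rcases hq with ⟨hqb, hqw⟩ | ⟨hqb, hqw⟩
          · exact absurd (h1.symm.trans hpb) hqb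
          · exact Prod.ext h1 (hpfS p.2 hpw q.2 hqw h2)
      · intro b v
        by_cases hb : b = b₀
        · subst hb
          obtain ⟨w, hwS, hw⟩ := hcpS v
          exact ⟨(b, w), Finset.mem_coe.2 ((hmemP _).2 (Or.inr ⟨rfl, hwS⟩)), rfl, hw⟩
        · exact ⟨(b, []), Finset.mem_coe.2 ((hmemP _).2 (Or.inl ⟨hb, rfl⟩)), rfl,
            Or.inl (List.nil_prefix)⟩
    · have hdisj : Disjoint ((Finset.univ.erase b₀).image (fun b => (b, ([] : List A))))
          (S.image (fun w => (b₀, w))) := by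
        rw [Finset.disjoint_left]
        rintro ⟨b, w⟩ h1 h2
        simp only [Finset.mem_image, Finset.mem_erase, Finset.mem_univ, and_true,
          Prod.mk.injEq] at h1 h2
        obtain ⟨b', hb', rfl, rfl⟩ := h1
        obtain ⟨w', _, hw2, _⟩ := h2
        exact hb' hw2.symm
      rw [hPdef, Finset.card_union_of_disjoint hdisj,
        Finset.card_image_of_injective _ (fun a b h => by simpa using (Prod.mk.injEq ..▸ h).1),
        Finset.card_image_of_injective _ (fun a b h => by simpa using h),
        Finset.card_erase_of_mem (Finset.mem_univ b₀), Finset.card_univ, hs, hcardS]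
      omega
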